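/- Let d ≥ 2 and 0 < h ≤ 1. For every w* in the unit sphere S_{d−1} of ℝ^d with d-th coordinate w*_d = h, there exists u ∈ ℝ^d \ {0} such that w* ∈ H_u and every w ∈ (S⁺_{d−1} ∩ H_u) \ {w*} satisfies w_d < h. -/

import Mathlib

/-- For `d ≥ 2`, `0 < h ≤ 1` and `w*` on the unit sphere of `ℝ^d` with `w*_d = h`,
there is `u ≠ 0` with `w* ∈ H_u` (i.e. `⟨u,w*⟩ ≥ 0`) and such that every
`w ∈ (S⁺_{d−1} ∩ H_u) \ {w*}` satisfies `w_d < h`. -/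
theorem close_to_northpole (d : ℕ) (hd : 2 ≤ d) (h : ℝ) (h0 : 0 < h) (h1 : h ≤ 1)
    (w : EuclideanSpace ℝ (Fin d)) (hw : ‖w‖ = 1)
    (hwd : w (Fin.mk (d - 1) (by omega)) = h) :
    ∃ u : EuclideanSpace ℝ (Fin d), u ≠ 0 ∧ (0:ℝ) ≤ inner ℝ u w ∧
      ∀ v : EuclideanSpace ℝ (Fin d), ‖v‖ = 1 → 0 < v (Fin.mk (d - 1) (by omega)) →
        (0:ℝ) ≤ inner ℝ u v → v ≠ w → v (Fin.mk (d - 1) (by omega)) < h := by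
  set i : Fin d := Fin.mk (d - 1) (by omega) with hi
  set e : EuclideanSpace ℝ (Fin d) := EuclideanSpace.single i (1:ℝ) with he
  have hne : ‖e‖ = 1 := by simp [he]
  have hinner_e : ∀ v : EuclideanSpace ℝ (Fin d), (inner ℝ e v : ℝ) = v i := by
    intro v
    simp [he, EuclideanSpace.inner_single_left]
  rcases eq_or_lt_of_le h1 with heq | hlt
  · -- h = 1 : take u = e
    refine ⟨e, ?_, ?_, ?_⟩
    · intro h0'
      have : ‖e‖ = 0 := by rw [h0']; simp
      rw [hne] at this; norm_num at this
    · rw [hinner_e, hwd]; linarith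
    · intro v hv hvpos hvin hvw
      have hCS : (inner ℝ e v : ℝ) ≤ 1 := by
        calc (inner ℝ e v : ℝ) ≤ ‖e‖ * ‖v‖ := real_inner_le_norm e v
        _ = 1 := by rw [hne, hv]; ring
      rw [hinner_e] at hCS
      rcases lt_or_eq_of_le hCS with h' | h'
      · linarith
      · exfalso
        have hev : (inner ℝ e v : ℝ) = 1 := by rw [hinner_e, h']
        have hv_eq : e = v := (inner_eq_one_iff_of_norm_eq_one hne hv).mp hev
        have hew : (inner ℝ e w : ℝ) = 1 := by rw [hinner_e, hwd, ← heq]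
        have hw_eq : e = w := (inner_eq_one_iff_of_norm_eq_one hne hw).mp hew
        exact hvw (hv_eq ▸ hw_eq)
  · -- h < 1 : take u = h • w - e
    refine ⟨h • w - e, ?_, ?_, ?_⟩
    · intro h0'
      have : h • w = e := by
        have := sub_eq_zero.mp h0'
        exact this
      have hn : ‖h • w‖ = ‖e‖ := by rw [this]
      rw [norm_smul, hw, hne] at hn
      simp [abs_of_pos h0] at hn
      linarith
    · have : (inner ℝ (h • w - e) w : ℝ) = h * (inner ℝ w w : ℝ) - w i := by
        rw [inner_sub_left, real_inner_smul_left, hinner_e]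
      rw [this, real_inner_self_eq_norm_sq, hw, hwd]
      ring_nf
      linarith
    · intro v hv hvpos hvin hvw
      have hexp : (inner ℝ (h • w - e) v : ℝ) = h * (inner ℝ w v : ℝ) - v i := by
        rw [inner_sub_left, real_inner_smul_left, hinner_e]
      rw [hexp] at hvin
      have hCS : (inner ℝ w v : ℝ) ≤ 1 := by
        calc (inner ℝ w v : ℝ) ≤ ‖w‖ * ‖v‖ := real_inner_le_norm w v
        _ = 1 := by rw [hw, hv]; ring
      have hle : v i ≤ h := by nlinarith
      rcases lt_or_eq_of_le hle with h' | h'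
      · exact h'
      · exfalso
        have hwv1 : (inner ℝ w v : ℝ) = 1 := by nlinarith
        have : w = v := (inner_eq_one_iff_of_norm_eq_one hw hv).mp hwv1
        exact hvw this.symm
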